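/- Fix d ≥ 4 and three pairwise non-proportional linear forms L_1, L_2, L_3 ∈ ℂ[x,y]_1. The set of forms F ∈ ℙ(ℂ[x,y]_d), up to scalar multiplication, with Waring rank two and divisible by L_1 L_2 L_3 is finite and its cardinality is at most d(d-1)(d-2). -/

import Mathlib

open MvPolynomial

noncomputable def lin (c : ℂ × ℂ) : MvPolynomial (Fin 2) ℂ :=
  C c.1 * X 0 + C c.2 * X 1

noncomputable def waringRank (d : ℕ) (F : MvPolynomial (Fin 2) ℂ) : ℕ :=
  sInf {r | ∃ (a : Fin r → ℂ) (c : Fin r → ℂ × ℂ), F = ∑ i, C (a i) * lin (c i) ^ d}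

namespace RankTwoAux

def e2 (v p : ℂ × ℂ) : ℂ := v.1 * p.1 + v.2 * p.2

def cr (u v : ℂ × ℂ) : ℂ := u.1 * v.2 - u.2 * v.1

lemma eval_lin (p c : ℂ × ℂ) : eval ![p.1, p.2] (lin c) = e2 c p := by
  simp [lin, e2]

lemma lin_pair (s : ℂ) (v : ℂ × ℂ) : lin (s * v.1, s * v.2) = C s * lin v := by
  simp only [lin, map_mul, mul_add]
  ring

lemma ne_fst_snd {p : ℂ × ℂ} (hp : p ≠ 0) (h1 : p.1 = 0) : p.2 ≠ 0 := by
  intro h2; exact hp (by cases p; simp_all [Prod.ext_iff])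

lemma cr_zero {u v p : ℂ × ℂ} (hp : p ≠ 0) (hu : e2 u p = 0) (hv : e2 v p = 0) :
    cr u v = 0 := by
  simp only [cr, e2] at *
  have h1 : (u.1 * v.2 - u.2 * v.1) * p.1 = 0 := by linear_combination v.2 * hu - u.2 * hv
  have h2 : (u.1 * v.2 - u.2 * v.1) * p.2 = 0 := by linear_combination u.1 * hv - v.1 * hu
  by_cases hp1 : p.1 = 0
  · exact (mul_eq_zero.mp h2).resolve_right (ne_fst_snd hp hp1)
  · exact (mul_eq_zero.mp h1).resolve_right hp1

lemma two_orth_zero {v p q : ℂ × ℂ} (hpq : cr p q ≠ 0) (h1 : e2 v p = 0) (h2 : e2 v q = 0) :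
    v = 0 := by
  simp only [cr, e2] at *
  have hv1 : v.1 * (p.1 * q.2 - p.2 * q.1) = 0 := by linear_combination q.2 * h1 - p.2 * h2
  have hv2 : v.2 * (p.1 * q.2 - p.2 * q.1) = 0 := by linear_combination p.1 * h2 - q.1 * h1
  have e1 : v.1 = 0 := (mul_eq_zero.mp hv1).resolve_right hpq
  have e2 : v.2 = 0 := (mul_eq_zero.mp hv2).resolve_right hpq
  cases v; simp_all [Prod.ext_iff]

lemma orth_rep {v p : ℂ × ℂ} (hp : p ≠ 0) (h : e2 v p = 0) :
    ∃ s : ℂ, v.1 = s * p.2 ∧ v.2 = -(s * p.1) := by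
  simp only [e2] at h
  by_cases h2 : p.2 = 0
  · have hp1 : p.1 ≠ 0 := fun h1 => hp (by cases p; simp_all [Prod.ext_iff])
    have hv1 : v.1 = 0 := by
      have := h; rw [h2, mul_zero, add_zero] at this
      exact (mul_eq_zero.mp this).resolve_right hp1
    exact ⟨-(v.2 / p.1), by simp [h2, hv1], by field_simp⟩
  · refine ⟨v.1 / p.2, by field_simp, ?_⟩
    field_simp
    linear_combination h

lemma prop_rep {M N : ℂ × ℂ} (h : cr M N = 0) (hM : M ≠ 0) :
    ∃ t : ℂ, N.1 = t * M.1 ∧ N.2 = t * M.2 := by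
  simp only [cr] at h
  by_cases h1 : M.1 = 0
  · have hM2 : M.2 ≠ 0 := ne_fst_snd hM h1
    have : N.1 = 0 := by
      have := h; rw [h1] at this
      have : M.2 * N.1 = 0 := by linear_combination -this
      exact (mul_eq_zero.mp this).resolve_left hM2
    exact ⟨N.2 / M.2, by simp [h1, this], by field_simp⟩
  · refine ⟨N.1 / M.1, by field_simp, ?_⟩
    field_simp
    linear_combination h
    

def HasInv (d : ℕ) (p₁ p₂ p₃ : ℂ × ℂ) (ζ₂ ζ₃ : ℂ) (F : MvPolynomial (Fin 2) ℂ) : Prop :=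
  ∃ (b : ℂ) (m n : ℂ × ℂ), b ≠ 0 ∧ cr m n ≠ 0 ∧
    F = C b * (lin n ^ d - lin m ^ d) ∧
    e2 m p₁ = e2 n p₁ ∧ e2 m p₂ = ζ₂ * e2 n p₂ ∧ e2 m p₃ = ζ₃ * e2 n p₃

lemma unique {d : ℕ} {p₁ p₂ p₃ : ℂ × ℂ} {ζ₂ ζ₃ : ℂ} {F F' : MvPolynomial (Fin 2) ℂ}
    (h12 : cr p₁ p₂ ≠ 0) (h13 : cr p₁ p₃ ≠ 0) (hz : ζ₂ ≠ ζ₃)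
    (hF : HasInv d p₁ p₂ p₃ ζ₂ ζ₃ F) (hF' : HasInv d p₁ p₂ p₃ ζ₂ ζ₃ F') :
    ∃ c : ℂ, c ≠ 0 ∧ F' = C c * F := by
  obtain ⟨b, m, n, hb, hmn, hFe, c1, c2, c3⟩ := hF
  obtain ⟨b', m', n', hb', hmn', hF'e, c1', c2', c3'⟩ := hF'
  have hp1 : p₁ ≠ 0 := by
    intro h; apply h12; simp [cr, h]
  have hn1 : e2 n p₁ ≠ 0 := by
    intro h
    exact hmn (cr_zero hp1 (by rw [c1, h]) h)
  obtain ⟨lam, hlam⟩ : ∃ l : ℂ, l = e2 n' p₁ / e2 n p₁ := ⟨_, rfl⟩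
  have hnn1 : e2 (n'.1 - lam * n.1, n'.2 - lam * n.2) p₁ = 0 := by
    simp only [e2] at *
    rw [hlam]
    have key : (n'.1 * p₁.1 + n'.2 * p₁.2) / (n.1 * p₁.1 + n.2 * p₁.2) * (n.1 * p₁.1 + n.2 * p₁.2) = n'.1 * p₁.1 + n'.2 * p₁.2 := div_mul_cancel₀ _ hn1
    linear_combination -key
  have hmm1 : e2 (m'.1 - lam * m.1, m'.2 - lam * m.2) p₁ = 0 := by
    simp only [e2] at hnn1 c1 c1' ⊢
    linear_combination hnn1 + c1' - lam * c1
  obtain ⟨s, hs1, hs2⟩ := orth_rep hp1 hmm1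
  obtain ⟨t, ht1, ht2⟩ := orth_rep hp1 hnn1
  simp only at hs1 hs2 ht1 ht2
  have hD2 : p₁.2 * p₂.1 - p₁.1 * p₂.2 ≠ 0 := by
    intro h; apply h12; simp only [cr]; linear_combination -h
  have hD3 : p₁.2 * p₃.1 - p₁.1 * p₃.2 ≠ 0 := by
    intro h; apply h13; simp only [cr]; linear_combination -h
  have hst2 : s = ζ₂ * t := by
    apply mul_right_cancel₀ hD2
    simp only [e2] at c2 c2'
    linear_combination c2' - lam * c2 - p₂.1 * hs1 - p₂.2 * hs2 + ζ₂ * p₂.1 * ht1 + ζ₂ * p₂.2 * ht2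
  have hst3 : s = ζ₃ * t := by
    apply mul_right_cancel₀ hD3
    simp only [e2] at c3 c3'
    linear_combination c3' - lam * c3 - p₃.1 * hs1 - p₃.2 * hs2 + ζ₃ * p₃.1 * ht1 + ζ₃ * p₃.2 * ht2
  have ht0 : t = 0 := by
    have h0 : (ζ₂ - ζ₃) * t = 0 := by linear_combination hst3 - hst2
    exact (mul_eq_zero.mp h0).resolve_left (sub_ne_zero.mpr hz)
  have hs0 : s = 0 := by rw [hst2, ht0, mul_zero]
  rw [hs0, zero_mul] at hs1 hs2
  rw [ht0, zero_mul] at ht1 ht2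
  have hm'1 : m'.1 = lam * m.1 := by linear_combination hs1
  have hm'2 : m'.2 = lam * m.2 := by linear_combination hs2
  have hn'1 : n'.1 = lam * n.1 := by linear_combination ht1
  have hn'2 : n'.2 = lam * n.2 := by linear_combination ht2
  have hlam0 : lam ≠ 0 := by
    intro h0
    apply hmn'
    rw [cr, hm'1, hm'2, hn'1, hn'2, h0]
    ring
  have hlinm : lin m' = C lam * lin m := by
    have h : m' = (lam * m.1, lam * m.2) := Prod.ext hm'1 hm'2
    rw [h, lin_pair]
  have hlinn : lin n' = C lam * lin n := by
    have h : n' = (lam * n.1, lam * n.2) := Prod.ext hn'1 hn'2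
    rw [h, lin_pair]
  refine ⟨b' * lam ^ d / b, div_ne_zero (mul_ne_zero hb' (pow_ne_zero d hlam0)) hb, ?_⟩
  have hc : b' * lam ^ d / b * b = b' * lam ^ d := by field_simp
  rw [hF'e, hFe, hlinm, hlinn, ← mul_assoc, ← map_mul, hc, mul_pow, mul_pow, ← map_pow, map_mul]
  ring

lemma extract {d : ℕ} (hd : d ≠ 0) {p₁ p₂ p₃ : ℂ × ℂ} {F : MvPolynomial (Fin 2) ℂ}
    (h12 : cr p₁ p₂ ≠ 0) (h23 : cr p₂ p₃ ≠ 0) (h13 : cr p₁ p₃ ≠ 0)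
    (hr : waringRank d F = 2)
    (ev1 : eval ![p₁.1, p₁.2] F = 0) (ev2 : eval ![p₂.1, p₂.2] F = 0)
    (ev3 : eval ![p₃.1, p₃.2] F = 0) :
    ∃ ζ₂ ζ₃ : ℂ, ζ₂ ^ d = 1 ∧ ζ₃ ^ d = 1 ∧ ζ₂ ≠ ζ₃ ∧ HasInv d p₁ p₂ p₃ ζ₂ ζ₃ F := by
  classical
  have hp1 : p₁ ≠ 0 := fun h => h12 (by simp [cr, h])
  have hp2 : p₂ ≠ 0 := fun h => h12 (by simp [cr, h])
  have hp3 : p₃ ≠ 0 := fun h => h13 (by simp [cr, h])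
  have hsinf : sInf {r | ∃ (a : Fin r → ℂ) (c : Fin r → ℂ × ℂ),
      F = ∑ i, C (a i) * lin (c i) ^ d} = 2 := hr
  have hne : Set.Nonempty {r | ∃ (a : Fin r → ℂ) (c : Fin r → ℂ × ℂ),
      F = ∑ i, C (a i) * lin (c i) ^ d} := by
    by_contra h
    rw [Set.not_nonempty_iff_eq_empty] at h
    rw [h, Nat.sInf_empty] at hsinf
    exact two_ne_zero hsinf.symm
  have h2T := Nat.sInf_mem hne
  rw [hsinf] at h2T
  have hnot1 : ∀ (a₀ : ℂ) (c₀ : ℂ × ℂ), F ≠ C a₀ * lin c₀ ^ d := by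
    intro a₀ c₀ h
    have h1T : (1 : ℕ) ∈ {r | ∃ (a : Fin r → ℂ) (c : Fin r → ℂ × ℂ),
        F = ∑ i, C (a i) * lin (c i) ^ d} :=
      ⟨fun _ => a₀, fun _ => c₀, by rw [Fin.sum_univ_one]; exact h⟩
    have hle := Nat.sInf_le h1T
    rw [hsinf] at hle
    exact Nat.not_succ_le_self 1 hle
  obtain ⟨a, c, hFe⟩ := h2T
  rw [Fin.sum_univ_two] at hFe
  revert hFe
  generalize a 0 = A; generalize a 1 = B; generalize c 0 = M; generalize c 1 = N
  intro hFe
  have hA : A ≠ 0 := by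
    intro h; apply hnot1 B N; rw [hFe, h, map_zero, zero_mul, zero_add]
  have hB : B ≠ 0 := by
    intro h; apply hnot1 A M; rw [hFe, h, map_zero, zero_mul, add_zero]
  have hMN : cr M N ≠ 0 := by
    intro h
    by_cases hM : M = 0
    · apply hnot1 B N
      rw [hFe, hM]
      simp [lin, zero_pow hd]
    · obtain ⟨t, ht1, ht2⟩ := prop_rep h hM
      apply hnot1 (A + B * t ^ d) M
      have hlinN : lin N = C t * lin M := by
        have hN : N = (t * M.1, t * M.2) := Prod.ext ht1 ht2
        rw [hN, lin_pair]
      rw [hFe, hlinN, mul_pow, ← map_pow, map_add, map_mul]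
      ring
  have heval : ∀ p : ℂ × ℂ, eval ![p.1, p.2] F = A * e2 M p ^ d + B * e2 N p ^ d := by
    intro p
    rw [hFe]
    simp [eval_lin]
  have E1 : A * e2 M p₁ ^ d + B * e2 N p₁ ^ d = 0 := by rw [← heval p₁]; exact ev1
  have E2 : A * e2 M p₂ ^ d + B * e2 N p₂ ^ d = 0 := by rw [← heval p₂]; exact ev2
  have E3 : A * e2 M p₃ ^ d + B * e2 N p₃ ^ d = 0 := by rw [← heval p₃]; exact ev3
  have hNi : ∀ p : ℂ × ℂ, p ≠ 0 → A * e2 M p ^ d + B * e2 N p ^ d = 0 → e2 N p ≠ 0 := by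
    intro p hp hE h0
    rw [h0, zero_pow hd, mul_zero, add_zero] at hE
    have hM0 : e2 M p = 0 := pow_eq_zero_iff hd |>.mp ((mul_eq_zero.mp hE).resolve_left hA)
    exact hMN (cr_zero hp hM0 h0)
  have hN1 := hNi p₁ hp1 E1
  have hN2 := hNi p₂ hp2 E2
  have hN3 := hNi p₃ hp3 E3
  obtain ⟨μ₁, hμ₁⟩ : ∃ x : ℂ, x = e2 M p₁ / e2 N p₁ := ⟨_, rfl⟩
  obtain ⟨μ₂, hμ₂⟩ : ∃ x : ℂ, x = e2 M p₂ / e2 N p₂ := ⟨_, rfl⟩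
  obtain ⟨μ₃, hμ₃⟩ : ∃ x : ℂ, x = e2 M p₃ / e2 N p₃ := ⟨_, rfl⟩
  have hM1 : e2 M p₁ = μ₁ * e2 N p₁ := by rw [hμ₁]; field_simp
  have hM2 : e2 M p₂ = μ₂ * e2 N p₂ := by rw [hμ₂]; field_simp
  have hM3 : e2 M p₃ = μ₃ * e2 N p₃ := by rw [hμ₃]; field_simp
  have hk : ∀ (μ : ℂ) (p : ℂ × ℂ), e2 N p ≠ 0 → e2 M p = μ * e2 N p →
      A * e2 M p ^ d + B * e2 N p ^ d = 0 → A * μ ^ d + B = 0 := by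
    intro μ p hN hMrel hE
    rw [hMrel, mul_pow] at hE
    have h0 : (A * μ ^ d + B) * e2 N p ^ d = 0 := by linear_combination hE
    exact (mul_eq_zero.mp h0).resolve_right (pow_ne_zero d hN)
  have hk1 := hk μ₁ p₁ hN1 hM1 E1
  have hk2 := hk μ₂ p₂ hN2 hM2 E2
  have hk3 := hk μ₃ p₃ hN3 hM3 E3
  have hμ₁0 : μ₁ ≠ 0 := by
    intro h
    rw [h, zero_pow hd, mul_zero, zero_add] at hk1
    exact hB hk1
  -- μ₂ ≠ μ₃
  have hμ23 : μ₂ ≠ μ₃ := by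
    intro h
    have hv2 : e2 (M.1 - μ₂ * N.1, M.2 - μ₂ * N.2) p₂ = 0 := by
      simp only [e2] at hM2 ⊢
      linear_combination hM2
    have hv3 : e2 (M.1 - μ₂ * N.1, M.2 - μ₂ * N.2) p₃ = 0 := by
      rw [h] at *
      simp only [e2] at hM3 ⊢
      linear_combination hM3
    have hv := two_orth_zero h23 hv2 hv3
    rw [Prod.ext_iff] at hv
    obtain ⟨hv1, hv2'⟩ := hv
    simp only [Prod.fst_zero, Prod.snd_zero] at hv1 hv2'
    apply hMN
    have e1 : M.1 = μ₂ * N.1 := by linear_combination hv1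
    have e2' : M.2 = μ₂ * N.2 := by linear_combination hv2'
    rw [cr, e1, e2']
    ring
  obtain ⟨ζ₂, hζ₂⟩ : ∃ z : ℂ, z = μ₂ / μ₁ := ⟨_, rfl⟩
  obtain ⟨ζ₃, hζ₃⟩ : ∃ z : ℂ, z = μ₃ / μ₁ := ⟨_, rfl⟩
  have hzrel2 : μ₂ = ζ₂ * μ₁ := by rw [hζ₂]; field_simp
  have hzrel3 : μ₃ = ζ₃ * μ₁ := by rw [hζ₃]; field_simp
  have hAμ : A * μ₁ ^ d ≠ 0 := mul_ne_zero hA (pow_ne_zero d hμ₁0)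
  have hzd : ∀ (ζ μ : ℂ), μ = ζ * μ₁ → A * μ ^ d + B = 0 → ζ ^ d = 1 := by
    intro ζ μ hrel hkμ
    apply mul_right_cancel₀ hAμ
    rw [hrel, mul_pow] at hkμ
    rw [one_mul]
    linear_combination hkμ - hk1
  have hζ₂d := hzd ζ₂ μ₂ hzrel2 hk2
  have hζ₃d := hzd ζ₃ μ₃ hzrel3 hk3
  have hζne : ζ₂ ≠ ζ₃ := by
    intro h
    apply hμ23
    rw [hzrel2, hzrel3, h]
  refine ⟨ζ₂, ζ₃, hζ₂d, hζ₃d, hζne, B, (μ₁⁻¹ * M.1, μ₁⁻¹ * M.2), N, hB, ?_, ?_, ?_, ?_, ?_⟩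
  · have hcrm : cr (μ₁⁻¹ * M.1, μ₁⁻¹ * M.2) N = μ₁⁻¹ * cr M N := by
      simp only [cr]; ring
    rw [hcrm]
    exact mul_ne_zero (inv_ne_zero hμ₁0) hMN
  · have hlinM : lin M = C μ₁ * lin (μ₁⁻¹ * M.1, μ₁⁻¹ * M.2) := by
      rw [lin_pair, ← mul_assoc, ← map_mul, mul_inv_cancel₀ hμ₁0, map_one, one_mul]
    have hAB : A * μ₁ ^ d = -B := by linear_combination hk1
    rw [hFe, hlinM, mul_pow, ← map_pow, ← mul_assoc, ← map_mul, hAB, map_neg]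
    ring
  · have h : e2 (μ₁⁻¹ * M.1, μ₁⁻¹ * M.2) p₁ = μ₁⁻¹ * e2 M p₁ := by simp only [e2]; ring
    rw [h, hM1, ← mul_assoc, inv_mul_cancel₀ hμ₁0, one_mul]
  · have h : e2 (μ₁⁻¹ * M.1, μ₁⁻¹ * M.2) p₂ = μ₁⁻¹ * e2 M p₂ := by simp only [e2]; ring
    rw [h, hM2, hzrel2]
    field_simp
  · have h : e2 (μ₁⁻¹ * M.1, μ₁⁻¹ * M.2) p₃ = μ₁⁻¹ * e2 M p₃ := by simp only [e2]; ring
    rw [h, hM3, hzrel3]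
    field_simp

end RankTwoAux


open RankTwoAux

open Classical in
noncomputable def pick (P : ℂ × ℂ → MvPolynomial (Fin 2) ℂ → Prop) (t : ℂ × ℂ) :
    MvPolynomial (Fin 2) ℂ :=
  if h : ∃ G, P t G then h.choose else 0

lemma pick_spec {P : ℂ × ℂ → MvPolynomial (Fin 2) ℂ → Prop} {t : ℂ × ℂ}
    (h : ∃ G, P t G) : P t (pick P t) := by
  rw [pick, dif_pos h]
  exact h.choose_spec

theorem rank_two_multiples_finite (d : ℕ) (hd : 4 ≤ d) (L₁ L₂ L₃ : ℂ × ℂ)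
    (h12 : L₁.1 * L₂.2 ≠ L₁.2 * L₂.1) (h23 : L₂.1 * L₃.2 ≠ L₂.2 * L₃.1)
    (h13 : L₁.1 * L₃.2 ≠ L₁.2 * L₃.1) :
    ∃ S : Finset (MvPolynomial (Fin 2) ℂ), S.card ≤ d * (d - 1) * (d - 2) ∧
      ∀ F : MvPolynomial (Fin 2) ℂ, F.IsHomogeneous d → waringRank d F = 2 →
        lin L₁ * lin L₂ * lin L₃ ∣ F →
        ∃ G ∈ S, ∃ c : ℂ, c ≠ 0 ∧ F = C c * G := by
  classical
  have hd0 : d ≠ 0 := by omega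
  have hc12 : cr (L₁.2, -L₁.1) (L₂.2, -L₂.1) ≠ 0 := by
    simp only [cr]
    intro h; apply h12; linear_combination h
  have hc23 : cr (L₂.2, -L₂.1) (L₃.2, -L₃.1) ≠ 0 := by
    simp only [cr]
    intro h; apply h23; linear_combination h
  have hc13 : cr (L₁.2, -L₁.1) (L₃.2, -L₃.1) ≠ 0 := by
    simp only [cr]
    intro h; apply h13; linear_combination h
  set P : ℂ × ℂ → MvPolynomial (Fin 2) ℂ → Prop :=
    fun t G => t.1 ≠ t.2 ∧ HasInv d (L₁.2, -L₁.1) (L₂.2, -L₂.1) (L₃.2, -L₃.1) t.1 t.2 G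
    with hP
  set T : Finset ℂ := (Polynomial.nthRoots d (1 : ℂ)).toFinset with hT
  have hTcard : T.card ≤ d :=
    le_trans (Multiset.toFinset_card_le _) (Polynomial.card_nthRoots d 1)
  refine ⟨(T ×ˢ T).image (pick P), ?_, ?_⟩
  · calc ((T ×ˢ T).image (pick P)).card
        ≤ (T ×ˢ T).card := Finset.card_image_le
      _ = T.card * T.card := Finset.card_product _ _
      _ ≤ d * d := Nat.mul_le_mul hTcard hTcard
      _ ≤ d * (d - 1) * (d - 2) := by
          rw [mul_assoc]
          apply Nat.mul_le_mul_left
          have e1 : d - 1 = (d - 4) + 3 := by omega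
          have e2 : d - 2 = (d - 4) + 2 := by omega
          have e0 : d = d - 4 + 4 := by omega
          rw [e1, e2]
          nlinarith [e0]
  · intro F _ hrank hdvd
    have hev : ∀ L : ℂ × ℂ, lin L ∣ F → eval ![(L.2, -L.1).1, (L.2, -L.1).2] F = 0 := by
      rintro L ⟨Q, hQ⟩
      rw [hQ, map_mul, eval_lin]
      have h0 : e2 L (L.2, -L.1) = 0 := by simp only [e2]; ring
      rw [h0, zero_mul]
    have ev1 := hev L₁ (dvd_trans ⟨lin L₂ * lin L₃, by ring⟩ hdvd)
    have ev2 := hev L₂ (dvd_trans ⟨lin L₁ * lin L₃, by ring⟩ hdvd)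
    have ev3 := hev L₃ (dvd_trans ⟨lin L₁ * lin L₂, by ring⟩ hdvd)
    obtain ⟨ζ₂, ζ₃, hz2, hz3, hzne, hinv⟩ :=
      extract hd0 hc12 hc23 hc13 hrank ev1 ev2 ev3
    have hEx : ∃ G, P (ζ₂, ζ₃) G := ⟨F, hzne, hinv⟩
    have hfP := pick_spec hEx
    obtain ⟨cc, hcc0, hcc⟩ := unique hc12 hc13 hzne hfP.2 hinv
    refine ⟨pick P (ζ₂, ζ₃), Finset.mem_image_of_mem (pick P) ?_, cc, hcc0, hcc⟩
    refine Finset.mem_product.mpr ⟨?_, ?_⟩ <;>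
      · show _ ∈ T
        rw [hT, Multiset.mem_toFinset, Polynomial.mem_nthRoots (by omega : 0 < d)]
        assumption
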